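/- Let p : 2^V → ℤ be skew-supermodular and (H = (V, E), w) a weighted hypergraph such that every hyperedge e ∈ E is contained in some (p, H, w)-tight set, b_{(H,w)}({u}) ≠ 0 for every u ∈ V, and b_{(H,w)}(X) ≥ p(X) for all X ⊆ V. Then the family of inclusion-wise maximal (p, H, w)-tight sets is a disjoint family. -/
import Mathlib


/-- Coverage function of a weighted hypergraph. -/
def coverage {V : Type*} [DecidableEq V] (E : Finset (Finset V)) (w : Finset V → ℕ)
    (X : Finset V) : ℤ :=
  ∑ e ∈ E.filter (fun e => (e ∩ X).Nonempty), (w e : ℤ)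

/-- Skew-supermodularity. -/
def SkewSupermodular {V : Type*} [DecidableEq V] (p : Finset V → ℤ) : Prop :=
  ∀ X Y : Finset V, p X + p Y ≤ p (X ∩ Y) + p (X ∪ Y) ∨
    p X + p Y ≤ p (X \ Y) + p (Y \ X)

lemma coverage_eq {V : Type*} [DecidableEq V] (E : Finset (Finset V)) (w : Finset V → ℕ)
    (X : Finset V) :
    coverage E w X = ∑ e ∈ E, if (e ∩ X).Nonempty then (w e : ℤ) else 0 :=
  Finset.sum_filter _ _

lemma ind_mono {V : Type*} [DecidableEq V] (w : Finset V → ℕ) (e A B : Finset V)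
    (h : A ⊆ B) :
    (if (e ∩ A).Nonempty then (w e : ℤ) else 0) ≤ (if (e ∩ B).Nonempty then (w e : ℤ) else 0) := by
  split_ifs with h1 h2
  · exact le_rfl
  · exact absurd (h1.mono (Finset.inter_subset_inter le_rfl h)) h2
  · positivity
  · exact le_rfl
lemma coverage_submod {V : Type*} [DecidableEq V] (E : Finset (Finset V)) (w : Finset V → ℕ)
    (X Y : Finset V) :
    coverage E w (X ∩ Y) + coverage E w (X ∪ Y) ≤ coverage E w X + coverage E w Y := by
  simp only [coverage_eq, ← Finset.sum_add_distrib]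
  apply Finset.sum_le_sum
  intro e _
  have hwe : (0 : ℤ) ≤ (w e : ℤ) := Int.natCast_nonneg _
  by_cases h1 : (e ∩ (X ∩ Y)).Nonempty
  · have hX : (e ∩ X).Nonempty := h1.mono (Finset.inter_subset_inter le_rfl Finset.inter_subset_left)
    have hY : (e ∩ Y).Nonempty := h1.mono (Finset.inter_subset_inter le_rfl Finset.inter_subset_right)
    have hU : (e ∩ (X ∪ Y)).Nonempty := hX.mono (Finset.inter_subset_inter le_rfl Finset.subset_union_left)
    rw [if_pos h1, if_pos hX, if_pos hY, if_pos hU]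
  · rw [if_neg h1, zero_add]
    have hXle : (0 : ℤ) ≤ (if (e ∩ X).Nonempty then (w e : ℤ) else 0) := by positivity
    have hYle : (0 : ℤ) ≤ (if (e ∩ Y).Nonempty then (w e : ℤ) else 0) := by positivity
    by_cases h2 : (e ∩ (X ∪ Y)).Nonempty
    · rw [if_pos h2]
      obtain ⟨a, ha⟩ := h2
      rw [Finset.mem_inter, Finset.mem_union] at ha
      rcases ha.2 with haX | haY
      · rw [if_pos ⟨a, Finset.mem_inter.2 ⟨ha.1, haX⟩⟩]
        linarith
      · rw [if_pos (show (e ∩ Y).Nonempty from ⟨a, Finset.mem_inter.2 ⟨ha.1, haY⟩⟩)]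
        linarith
    · rw [if_neg h2]
      positivity
lemma coverage_diff_lt {V : Type*} [DecidableEq V] (E : Finset (Finset V)) (w : Finset V → ℕ)
    (hw : ∀ e ∈ E, 0 < w e) (X T e0 : Finset V) (he0 : e0 ∈ E) (he0T : e0 ⊆ T)
    (he0X : (e0 ∩ X).Nonempty) :
    coverage E w (X \ T) + coverage E w (T \ X) < coverage E w X + coverage E w T := by
  simp only [coverage_eq, ← Finset.sum_add_distrib]
  apply Finset.sum_lt_sum
  · intro e _
    exact add_le_add (ind_mono w e _ _ (Finset.sdiff_subset)) (ind_mono w e _ _ (Finset.sdiff_subset))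
  · refine ⟨e0, he0, ?_⟩
    have hXpos : (if (e0 ∩ X).Nonempty then (w e0 : ℤ) else 0) = (w e0 : ℤ) := if_pos he0X
    have hTpos : (e0 ∩ T).Nonempty := by
      obtain ⟨a, ha⟩ := he0X
      rw [Finset.mem_inter] at ha
      exact ⟨a, Finset.mem_inter.2 ⟨ha.1, he0T ha.1⟩⟩
    have hXT : ¬ (e0 ∩ (X \ T)).Nonempty := by
      rintro ⟨a, ha⟩
      rw [Finset.mem_inter, Finset.mem_sdiff] at ha
      exact ha.2.2 (he0T ha.1)
    have h1 : (if (e0 ∩ (T \ X)).Nonempty then (w e0 : ℤ) else 0) ≤ (w e0 : ℤ) := by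
      split_ifs
      · exact le_rfl
      · positivity
    have hwpos : (0 : ℤ) < (w e0 : ℤ) := by exact_mod_cast hw e0 he0
    rw [if_neg hXT, if_pos he0X, if_pos hTpos]
    linarith

lemma tight_union {V : Type*} [DecidableEq V] (E : Finset (Finset V)) (w : Finset V → ℕ)
    (p : Finset V → ℤ) (hw : ∀ e ∈ E, 0 < w e) (hp : SkewSupermodular p)
    (hcover : ∀ Z : Finset V, p Z ≤ coverage E w Z)
    (X T : Finset V) (hX : coverage E w X = p X) (hT : coverage E w T = p T)
    (e0 : Finset V) (he0 : e0 ∈ E) (he0T : e0 ⊆ T) (he0X : (e0 ∩ X).Nonempty) :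
    coverage E w (X ∪ T) = p (X ∪ T) := by
  rcases hp X T with h | h
  · have h1 := coverage_submod E w X T
    have h2 := hcover (X ∩ T)
    have h3 := hcover (X ∪ T)
    linarith
  · have h1 := coverage_diff_lt E w hw X T e0 he0 he0T he0X
    have h2 := hcover (X \ T)
    have h3 := hcover (T \ X)
    linarith

/-- Under the stated hypotheses, the family of inclusion-wise maximal tight sets
is a disjoint family. -/
theorem maximal_tight_sets_disjoint {V : Type*} [Fintype V] [DecidableEq V]
    (E : Finset (Finset V)) (w : Finset V → ℕ) (p : Finset V → ℤ)
    (hw : ∀ e ∈ E, 0 < w e)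
    (hp : SkewSupermodular p)
    (hcover : ∀ Z : Finset V, p Z ≤ coverage E w Z)
    (htight : ∀ e ∈ E, ∃ X : Finset V, e ⊆ X ∧ coverage E w X = p X)
    (hdeg : ∀ u : V, coverage E w {u} ≠ 0) :
    ∀ X Y : Finset V,
      (coverage E w X = p X ∧ ∀ X' : Finset V, coverage E w X' = p X' → X ⊆ X' → X = X') →
      (coverage E w Y = p Y ∧ ∀ Y' : Finset V, coverage E w Y' = p Y' → Y ⊆ Y' → Y = Y') →
      X ≠ Y → X ∩ Y = ∅ := by
  intro X Y ⟨hXt, hXmax⟩ ⟨hYt, hYmax⟩ hXY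
  by_contra hne
  obtain ⟨u, hu⟩ := Finset.nonempty_iff_ne_empty.2 hne
  rw [Finset.mem_inter] at hu
  -- get an edge containing u
  have : ∃ e0 ∈ E, u ∈ e0 := by
    by_contra hno
    push_neg at hno
    apply hdeg u
    rw [coverage_eq]
    apply Finset.sum_eq_zero
    intro e he
    rw [if_neg]
    rintro ⟨a, ha⟩
    rw [Finset.mem_inter, Finset.mem_singleton] at ha
    exact hno e he (ha.2 ▸ ha.1)
  obtain ⟨e0, he0E, hue0⟩ := this
  obtain ⟨T, he0T, hTt⟩ := htight e0 he0E
  -- T ⊆ Y since Y ∪ T is tight and Y is maximal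
  have he0Y : (e0 ∩ Y).Nonempty := ⟨u, Finset.mem_inter.2 ⟨hue0, hu.2⟩⟩
  have hYT := tight_union E w p hw hp hcover Y T hYt hTt e0 he0E he0T he0Y
  have hYeq := hYmax (Y ∪ T) hYT Finset.subset_union_left
  have hTY : T ⊆ Y := by
    intro a ha
    rw [hYeq]
    exact Finset.mem_union_right _ ha
  -- now e0 ⊆ Y and e0 meets X, so X ∪ Y is tight
  have he0X : (e0 ∩ X).Nonempty := ⟨u, Finset.mem_inter.2 ⟨hue0, hu.1⟩⟩
  have hXY' := tight_union E w p hw hp hcover X Y hXt hYt e0 he0E (he0T.trans hTY) he0X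
  have h1 := hXmax (X ∪ Y) hXY' Finset.subset_union_left
  have h2 := hYmax (X ∪ Y) hXY' Finset.subset_union_right
  exact hXY (h1.trans h2.symm)
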